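/- If m is odd, then A commutes with every gamma operator: A ∘ Γ_I = Γ_I ∘ A for all I ∈ {1, …, 2m}. If m is even, then B commutes with every gamma operator: B ∘ Γ_I = Γ_I ∘ B for all I ∈ {1, …, 2m}. (Hence A is Pin(2m)-equivariant for odd m and B is Pin(2m)-equivariant for even m.) -/

import Mathlib

noncomputable section

/-- The spinor space `P`: complex functions on subsets of `Fin m`
(the fermionic Fock model of the exterior algebra of `ℂ^m`). -/
abbrev SpinorSpace (m : ℕ) := Finset (Fin m) → ℂ

/-- The creation operator `c_j`. -/
def creation {m : ℕ} (j : Fin m) (f : SpinorSpace m) : SpinorSpace m := fun S =>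
  if j ∈ S then (-1 : ℂ) ^ (S.filter fun i => i < j).card * f (S.erase j) else 0

/-- The annihilation operator `a_j`. -/
def annihilation {m : ℕ} (j : Fin m) (f : SpinorSpace m) : SpinorSpace m := fun S =>
  if j ∈ S then 0 else (-1 : ℂ) ^ (S.filter fun i => i < j).card * f (insert j S)


private lemma filt_erase_card {m : ℕ} {S : Finset (Fin m)} {j : Fin m} (hj : j ∈ S) (k : Fin m) :
    (S.filter fun i => i < k).card
      = ((S.erase j).filter fun i => i < k).card + (if j < k then 1 else 0) := by
  rw [Finset.filter_erase]
  by_cases h : j < k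
  · have hmem : j ∈ S.filter fun i => i < k := Finset.mem_filter.2 ⟨hj, h⟩
    rw [if_pos h, Finset.card_erase_of_mem hmem]
    have : 0 < (S.filter fun i => i < k).card := Finset.card_pos.2 ⟨j, hmem⟩
    omega
  · rw [if_neg h, Finset.erase_eq_of_notMem, add_zero]
    simp [Finset.mem_filter, h]

private lemma filt_insert_card {m : ℕ} {S : Finset (Fin m)} {j : Fin m} (hj : j ∉ S) (k : Fin m) :
    ((insert j S).filter fun i => i < k).card
      = (S.filter fun i => i < k).card + (if j < k then 1 else 0) := by
  rw [Finset.filter_insert]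
  by_cases h : j < k
  · rw [if_pos h, if_pos h,
      Finset.card_insert_of_notMem (fun hc => hj (Finset.mem_filter.1 hc).1)]
  · rw [if_neg h, if_neg h, add_zero]

lemma creation_creation {m : ℕ} (j k : Fin m) (f : SpinorSpace m) :
    creation j (creation k f) = -(creation k (creation j f)) := by
  funext S
  by_cases hjk : j = k
  · subst hjk; simp [creation]
  simp only [creation, Pi.neg_apply]
  by_cases hj : j ∈ S
  · by_cases hk : k ∈ S
    · have hk' : k ∈ S.erase j := Finset.mem_erase.2 ⟨Ne.symm hjk, hk⟩
      have hj' : j ∈ S.erase k := Finset.mem_erase.2 ⟨hjk, hj⟩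
      rw [if_pos hj, if_pos hk, if_pos hk', if_pos hj', Finset.erase_right_comm]
      have hB := filt_erase_card hj k
      have hA := filt_erase_card hk j
      rcases lt_or_gt_of_ne hjk with h | h
      · rw [if_pos h] at hB; rw [if_neg (asymm h)] at hA
        rw [hA, hB, add_zero, pow_succ]; ring
      · rw [if_neg (asymm h)] at hB; rw [if_pos h] at hA
        rw [hA, hB, add_zero, pow_succ]; ring
    · simp [hj, hk, Finset.mem_erase]
  · simp [hj, Finset.mem_erase]

lemma annihilation_annihilation {m : ℕ} (j k : Fin m) (f : SpinorSpace m) :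
    annihilation j (annihilation k f) = -(annihilation k (annihilation j f)) := by
  funext S
  by_cases hjk : j = k
  · subst hjk; simp [annihilation]
  simp only [annihilation, Pi.neg_apply]
  by_cases hj : j ∈ S
  · simp [hj, Finset.mem_insert]
  · by_cases hk : k ∈ S
    · simp [hj, hk, Finset.mem_insert]
    · have hk' : k ∉ insert j S := by
        simp only [Finset.mem_insert, not_or]
        exact ⟨fun h => hjk h.symm, hk⟩
      have hj' : j ∉ insert k S := by
        simp only [Finset.mem_insert, not_or]
        exact ⟨hjk, hj⟩
      rw [if_neg hj, if_neg hk, if_neg hk', if_neg hj', Finset.insert_comm]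
      rw [filt_insert_card hj k, filt_insert_card hk j]
      rcases lt_or_gt_of_ne hjk with h | h
      · rw [if_pos h, if_neg (asymm h), add_zero, pow_succ]; ring
      · rw [if_neg (asymm h), if_pos h, add_zero, pow_succ]; ring

lemma creation_annihilation {m : ℕ} {j k : Fin m} (hjk : j ≠ k) (f : SpinorSpace m) :
    creation j (annihilation k f) = -(annihilation k (creation j f)) := by
  funext S
  simp only [creation, annihilation, Pi.neg_apply]
  by_cases hj : j ∈ S
  · by_cases hk : k ∈ S
    · have hk' : k ∈ S.erase j := Finset.mem_erase.2 ⟨fun h => hjk h.symm, hk⟩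
      simp [hj, hk, hk']
    · have hk' : k ∉ S.erase j := fun h => hk (Finset.mem_erase.1 h).2
      have hj' : j ∈ insert k S := Finset.mem_insert.2 (Or.inr hj)
      rw [if_pos hj, if_neg hk', if_neg hk, if_pos hj',
        Finset.erase_insert_of_ne (Ne.symm hjk), ]
      rw [filt_erase_card hj k, filt_insert_card hk j]
      rcases lt_or_gt_of_ne hjk with h | h
      · rw [if_pos h, if_neg (asymm h), add_zero, pow_succ]; ring
      · rw [if_neg (asymm h), if_pos h, add_zero, pow_succ]; ring
  · have hj' : j ∉ insert k S := by simp [Finset.mem_insert, hj, hjk]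
    simp [hj, hj']

private lemma neg_one_sq_pow (a : ℕ) : ((-1:ℂ))^a * (-1)^a = 1 := by
  rw [← pow_add]; exact Even.neg_one_pow ⟨a, rfl⟩

lemma creation_annihilation_self {m : ℕ} (j : Fin m) (f : SpinorSpace m) :
    creation j (annihilation j f) + annihilation j (creation j f) = f := by
  funext S
  simp only [creation, annihilation, Pi.add_apply]
  by_cases hj : j ∈ S
  · rw [if_pos hj, if_pos hj, if_neg (Finset.notMem_erase j S),
      Finset.insert_erase hj, add_zero]
    have h := filt_erase_card hj j
    rw [if_neg (lt_irrefl j), add_zero] at h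
    rw [← h, ← mul_assoc, neg_one_sq_pow, one_mul]
  · rw [if_neg hj, if_neg hj, if_pos (Finset.mem_insert_self j S),
      Finset.erase_insert hj, zero_add]
    have h := filt_insert_card hj j
    rw [if_neg (lt_irrefl j), add_zero] at h
    rw [h, ← mul_assoc, neg_one_sq_pow, one_mul]

lemma creation_add {m : ℕ} (j : Fin m) (f g : SpinorSpace m) :
    creation j (f + g) = creation j f + creation j g := by
  funext S; simp only [creation, Pi.add_apply]
  by_cases h : j ∈ S <;> simp [h, mul_add]

lemma creation_smul {m : ℕ} (j : Fin m) (z : ℂ) (f : SpinorSpace m) :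
    creation j (z • f) = z • creation j f := by
  funext S; simp only [creation, Pi.smul_apply, smul_eq_mul]
  by_cases h : j ∈ S <;> simp [h]; ring

lemma annihilation_add {m : ℕ} (j : Fin m) (f g : SpinorSpace m) :
    annihilation j (f + g) = annihilation j f + annihilation j g := by
  funext S; simp only [annihilation, Pi.add_apply]
  by_cases h : j ∈ S <;> simp [h, mul_add]

lemma annihilation_smul {m : ℕ} (j : Fin m) (z : ℂ) (f : SpinorSpace m) :
    annihilation j (z • f) = z • annihilation j f := by
  funext S; simp only [annihilation, Pi.smul_apply, smul_eq_mul]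
  by_cases h : j ∈ S <;> simp [h]; ring

def cOp {m : ℕ} (j : Fin m) : Module.End ℂ (SpinorSpace m) where
  toFun := creation j
  map_add' := creation_add j
  map_smul' := creation_smul j

def aOp {m : ℕ} (j : Fin m) : Module.End ℂ (SpinorSpace m) where
  toFun := annihilation j
  map_add' := annihilation_add j
  map_smul' := annihilation_smul j

@[simp] lemma cOp_apply {m : ℕ} (j : Fin m) (f : SpinorSpace m) : cOp j f = creation j f := rfl
@[simp] lemma aOp_apply {m : ℕ} (j : Fin m) (f : SpinorSpace m) : aOp j f = annihilation j f := rfl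

lemma ccE {m : ℕ} (j k : Fin m) : cOp j * cOp k + cOp k * cOp j = 0 := by
  apply LinearMap.ext; intro f
  simp only [LinearMap.add_apply, Module.End.mul_apply, LinearMap.zero_apply,
    cOp_apply, creation_creation j k f]
  ring

lemma aaE {m : ℕ} (j k : Fin m) : aOp j * aOp k + aOp k * aOp j = 0 := by
  apply LinearMap.ext; intro f
  simp only [LinearMap.add_apply, Module.End.mul_apply, LinearMap.zero_apply,
    aOp_apply, annihilation_annihilation j k f]
  ring

lemma caE {m : ℕ} {j k : Fin m} (h : j ≠ k) : cOp j * aOp k + aOp k * cOp j = 0 := by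
  apply LinearMap.ext; intro f
  simp only [LinearMap.add_apply, Module.End.mul_apply, LinearMap.zero_apply,
    cOp_apply, aOp_apply, creation_annihilation h f]
  ring

lemma acE {m : ℕ} {j k : Fin m} (h : j ≠ k) : aOp j * cOp k + cOp k * aOp j = 0 := by
  rw [add_comm]; exact caE (Ne.symm h)

lemma caE_self {m : ℕ} (j : Fin m) : cOp j * aOp j + aOp j * cOp j = 1 := by
  apply LinearMap.ext; intro f
  simp only [LinearMap.add_apply, Module.End.mul_apply, Module.End.one_apply,
    cOp_apply, aOp_apply]
  exact creation_annihilation_self j f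

lemma csqE {m : ℕ} (j : Fin m) : cOp j * cOp j = 0 := by
  apply LinearMap.ext; intro f
  simp only [Module.End.mul_apply, LinearMap.zero_apply, cOp_apply]
  funext S; simp [creation]

lemma asqE {m : ℕ} (j : Fin m) : aOp j * aOp j = 0 := by
  apply LinearMap.ext; intro f
  simp only [Module.End.mul_apply, LinearMap.zero_apply, aOp_apply]
  funext S; simp [annihilation]

/-- The gamma operators `Γ_I`, `I = 1, …, 2m`, here indexed by `Fin (2 * m)` (0-based):
`Γ_j = c_j + a_j` and `Γ_{m+j} = i (c_j − a_j)` for `j = 1, …, m`. -/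
def gammaOp {m : ℕ} (I : Fin (2 * m)) (f : SpinorSpace m) : SpinorSpace m :=
  if h : (I : ℕ) < m then
    creation ⟨(I : ℕ), h⟩ f + annihilation ⟨(I : ℕ), h⟩ f
  else
    Complex.I • (creation ⟨(I : ℕ) - m, by have := I.isLt; omega⟩ f
      - annihilation ⟨(I : ℕ) - m, by have := I.isLt; omega⟩ f)

def gOp {m : ℕ} (I : Fin (2 * m)) : Module.End ℂ (SpinorSpace m) :=
  if h : (I : ℕ) < m then cOp ⟨(I : ℕ), h⟩ + aOp ⟨(I : ℕ), h⟩
  else Complex.I • (cOp ⟨(I : ℕ) - m, by have := I.isLt; omega⟩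
    - aOp ⟨(I : ℕ) - m, by have := I.isLt; omega⟩)

lemma gammaOp_eq_gOp {m : ℕ} (I : Fin (2 * m)) (f : SpinorSpace m) :
    gammaOp I f = gOp I f := by
  unfold gammaOp gOp
  split <;> rfl

private lemma anticomm_expand1 {R : Type*} [Ring R] (x y z w : R) :
    (x + y) * (z + w) + (z + w) * (x + y)
      = (x*z + z*x) + ((x*w + w*x) + ((y*z + z*y) + (y*w + w*y))) := by noncomm_ring

private lemma anticomm_expand2 {R : Type*} [Ring R] (x y z w : R) :
    (x + y) * (z - w) + (z - w) * (x + y)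
      = (x*z + z*x) - (x*w + w*x) + ((y*z + z*y) - (y*w + w*y)) := by noncomm_ring

private lemma anticomm_expand3 {R : Type*} [Ring R] (x y z w : R) :
    (x - y) * (z - w) + (z - w) * (x - y)
      = (x*z + z*x) - (x*w + w*x) - ((y*z + z*y) - (y*w + w*y)) := by noncomm_ring

private lemma anticomm_expand_same {R : Type*} [Ring R] (x y : R) :
    (x + y) * (x - y) + (x - y) * (x + y) = (x*x + x*x) - (y*y + y*y) := by noncomm_ring

private lemma sq_expand1 {R : Type*} [Ring R] (x y : R) :
    (x + y) * (x + y) = x*x + (x*y + y*x) + y*y := by noncomm_ring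

private lemma sq_expand2 {R : Type*} [Ring R] (x y : R) :
    (x - y) * (x - y) = x*x - (x*y + y*x) + y*y := by noncomm_ring

lemma gOp_sq {m : ℕ} (I : Fin (2 * m)) : gOp I * gOp I = 1 := by
  unfold gOp
  split
  · rw [sq_expand1, csqE, asqE, caE_self]; simp
  · rw [smul_mul_smul_comm, Complex.I_mul_I, sq_expand2, csqE, asqE, caE_self]
    simp

private lemma gOp_anticomm_lt {m : ℕ} {I J : Fin (2 * m)} (h1 : (I : ℕ) < m)
    (hne : I ≠ J) : gOp I * gOp J + gOp J * gOp I = 0 := by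
  have hIJ : (I : ℕ) ≠ (J : ℕ) := fun hc => hne (Fin.ext hc)
  unfold gOp
  rw [dif_pos h1]
  split
  · rename_i h2
    have hjk : (⟨(I:ℕ), h1⟩ : Fin m) ≠ ⟨(J:ℕ), h2⟩ := by
      simp only [ne_eq, Fin.mk.injEq]; exact hIJ
    rw [anticomm_expand1, ccE, caE hjk, acE hjk, aaE]; simp
  · rename_i h2
    by_cases hjk : (⟨(I:ℕ), h1⟩ : Fin m) = ⟨(J:ℕ) - m, by have := J.isLt; omega⟩
    · rw [mul_smul_comm, smul_mul_assoc, ← smul_add, ← hjk,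
        anticomm_expand_same, csqE, asqE]
      simp
    · rw [mul_smul_comm, smul_mul_assoc, ← smul_add,
        anticomm_expand2, ccE, caE hjk, acE hjk, aaE]
      simp

private lemma gOp_anticomm_ge {m : ℕ} {I J : Fin (2 * m)} (h1 : ¬ (I : ℕ) < m)
    (h2 : ¬ (J : ℕ) < m) (hne : I ≠ J) : gOp I * gOp J + gOp J * gOp I = 0 := by
  have hIJ : (I : ℕ) ≠ (J : ℕ) := fun hc => hne (Fin.ext hc)
  have hjk : (⟨(I:ℕ) - m, by have := I.isLt; omega⟩ : Fin m)
      ≠ ⟨(J:ℕ) - m, by have := J.isLt; omega⟩ := by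
    simp only [ne_eq, Fin.mk.injEq]
    omega
  unfold gOp
  rw [dif_neg h1, dif_neg h2, smul_mul_smul_comm, smul_mul_smul_comm, ← smul_add,
    anticomm_expand3, ccE, caE hjk, acE hjk, aaE]
  simp

lemma gOp_anticomm {m : ℕ} {I J : Fin (2 * m)} (hne : I ≠ J) :
    gOp I * gOp J + gOp J * gOp I = 0 := by
  by_cases h1 : (I : ℕ) < m
  · exact gOp_anticomm_lt h1 hne
  · by_cases h2 : (J : ℕ) < m
    · rw [add_comm]; exact gOp_anticomm_lt h2 (Ne.symm hne)
    · exact gOp_anticomm_ge h1 h2 hne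

lemma gammaOp_smul {m : ℕ} (I : Fin (2 * m)) (z : ℂ) (f : SpinorSpace m) :
    gammaOp I (z • f) = z • gammaOp I f := by
  rw [gammaOp_eq_gOp, gammaOp_eq_gOp, map_smul]

lemma gammaOp_neg {m : ℕ} (I : Fin (2 * m)) (f : SpinorSpace m) :
    gammaOp I (-f) = -gammaOp I f := by
  rw [gammaOp_eq_gOp, gammaOp_eq_gOp, map_neg]

lemma gammaOp_gammaOp_self {m : ℕ} (I : Fin (2 * m)) (f : SpinorSpace m) :
    gammaOp I (gammaOp I f) = f := by
  have := LinearMap.congr_fun (gOp_sq I) f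
  simp only [Module.End.mul_apply, Module.End.one_apply] at this
  rw [gammaOp_eq_gOp, gammaOp_eq_gOp, this]

lemma gammaOp_anticomm_apply {m : ℕ} {I J : Fin (2 * m)} (hne : I ≠ J) (f : SpinorSpace m) :
    gammaOp I (gammaOp J f) = -(gammaOp J (gammaOp I f)) := by
  have := LinearMap.congr_fun (gOp_anticomm hne) f
  simp only [LinearMap.add_apply, Module.End.mul_apply, LinearMap.zero_apply] at this
  have h2 : gammaOp I (gammaOp J f) + gammaOp J (gammaOp I f) = 0 := by
    simp only [gammaOp_eq_gOp]; exact this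
  exact eq_neg_of_add_eq_zero_left h2

/-- The Hermitian inner product `⟨f, g⟩ = Σ_S conj (f S) * g S` on the spinor space. -/
def herm {m : ℕ} (f g : SpinorSpace m) : ℂ :=
  ∑ S : Finset (Fin m), (starRingEnd ℂ) (f S) * g S

/-- The composition `Γ_{I₁} ∘ Γ_{I₂} ∘ ⋯ ∘ Γ_{I_k}` corresponding to a list of indices. -/
def gammaProd {m : ℕ} (l : List (Fin (2 * m))) : SpinorSpace m → SpinorSpace m :=
  l.foldr (fun I F => gammaOp I ∘ F) id

@[simp] lemma gammaProd_nil {m : ℕ} (f : SpinorSpace m) : gammaProd [] f = f := rfl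

@[simp] lemma gammaProd_cons {m : ℕ} (J : Fin (2 * m)) (l : List (Fin (2 * m)))
    (f : SpinorSpace m) : gammaProd (J :: l) f = gammaOp J (gammaProd l f) := rfl

lemma gammaProd_smul {m : ℕ} (l : List (Fin (2 * m))) (z : ℂ) (f : SpinorSpace m) :
    gammaProd l (z • f) = z • gammaProd l f := by
  induction l with
  | nil => rfl
  | cons J l ih => rw [gammaProd_cons, gammaProd_cons, ih, gammaOp_smul]

lemma gammaProd_neg {m : ℕ} (l : List (Fin (2 * m))) (f : SpinorSpace m) :
    gammaProd l (-f) = -gammaProd l f := by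
  induction l with
  | nil => rfl
  | cons J l ih => rw [gammaProd_cons, gammaProd_cons, ih, gammaOp_neg]

lemma move_not_mem {m : ℕ} (l : List (Fin (2 * m))) (I : Fin (2 * m)) (h : I ∉ l)
    (f : SpinorSpace m) :
    gammaProd l (gammaOp I f) = ((-1 : ℂ) ^ l.length) • gammaOp I (gammaProd l f) := by
  induction l with
  | nil => simp
  | cons J l ih =>
    have hJ : I ≠ J := fun hc => h (hc ▸ (List.mem_cons_self : J ∈ J :: l))
    have hl : I ∉ l := fun hc => h (List.mem_cons_of_mem J hc)
    rw [gammaProd_cons, ih hl, gammaOp_smul, gammaOp_anticomm_apply (Ne.symm hJ),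
      List.length_cons, pow_succ, gammaProd_cons]
    rw [smul_neg, ← neg_smul]
    congr 1
    ring

lemma move_mem {m : ℕ} (l : List (Fin (2 * m))) (I : Fin (2 * m)) (hnd : l.Nodup)
    (h : I ∈ l) (f : SpinorSpace m) :
    gammaProd l (gammaOp I f) = ((-1 : ℂ) ^ (l.length - 1)) • gammaOp I (gammaProd l f) := by
  induction l with
  | nil => simp at h
  | cons J l ih =>
    rcases List.mem_cons.1 h with hIJ | hIl
    · subst hIJ
      have hl : I ∉ l := (List.nodup_cons.1 hnd).1
      rw [gammaProd_cons, move_not_mem l I hl, gammaOp_smul, gammaOp_gammaOp_self,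
        gammaProd_cons, gammaOp_gammaOp_self]
      simp
    · have hJ : I ≠ J := fun hc => (List.nodup_cons.1 hnd).1 (hc ▸ hIl)
      have hlen : 1 ≤ l.length := List.length_pos_iff.2 (List.ne_nil_of_mem hIl)
      rw [gammaProd_cons, ih (List.nodup_cons.1 hnd).2 hIl, gammaOp_smul,
        gammaOp_anticomm_apply (Ne.symm hJ), gammaProd_cons, smul_neg, ← neg_smul]
      have h3 : (J :: l).length - 1 = (l.length - 1) + 1 := by
        simp only [List.length_cons]; omega
      rw [h3, pow_succ]
      congr 1
      ring

/-- The conjugation operator `κ`. -/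
def conjOp {m : ℕ} (f : SpinorSpace m) : SpinorSpace m := fun S => (starRingEnd ℂ) (f S)

lemma conjOp_add {m : ℕ} (f g : SpinorSpace m) :
    conjOp (f + g) = conjOp f + conjOp g := by
  funext S; simp [conjOp]

lemma conjOp_sub {m : ℕ} (f g : SpinorSpace m) :
    conjOp (f - g) = conjOp f - conjOp g := by
  funext S; simp [conjOp]

lemma conjOp_I_smul {m : ℕ} (f : SpinorSpace m) :
    conjOp (Complex.I • f) = -(Complex.I • conjOp f) := by
  funext S
  simp only [conjOp, Pi.smul_apply, smul_eq_mul, map_mul, Complex.conj_I, Pi.neg_apply]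
  ring

lemma creation_conj {m : ℕ} (j : Fin m) (f : SpinorSpace m) :
    conjOp (creation j f) = creation j (conjOp f) := by
  funext S
  simp only [conjOp, creation]
  by_cases h : j ∈ S <;> simp [h]

lemma annihilation_conj {m : ℕ} (j : Fin m) (f : SpinorSpace m) :
    conjOp (annihilation j f) = annihilation j (conjOp f) := by
  funext S
  simp only [conjOp, annihilation]
  by_cases h : j ∈ S <;> simp [h]

lemma conj_gammaOp_lt {m : ℕ} {I : Fin (2 * m)} (h : (I : ℕ) < m) (f : SpinorSpace m) :
    conjOp (gammaOp I f) = gammaOp I (conjOp f) := by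
  unfold gammaOp
  rw [dif_pos h, dif_pos h, conjOp_add, creation_conj, annihilation_conj]

lemma conj_gammaOp_ge {m : ℕ} {I : Fin (2 * m)} (h : ¬ (I : ℕ) < m) (f : SpinorSpace m) :
    conjOp (gammaOp I f) = -(gammaOp I (conjOp f)) := by
  unfold gammaOp
  rw [dif_neg h, dif_neg h, conjOp_I_smul, conjOp_sub, creation_conj, annihilation_conj]

/-- The conjugate-linear operator `A = Γ_1 ∘ Γ_2 ∘ ⋯ ∘ Γ_m ∘ κ`. -/
def opA (m : ℕ) : SpinorSpace m → SpinorSpace m :=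
  gammaProd (List.ofFn fun j : Fin m =>
    (⟨(j : ℕ), by have := j.isLt; omega⟩ : Fin (2 * m))) ∘ conjOp

/-- The conjugate-linear operator `B = Γ_{m+1} ∘ Γ_{m+2} ∘ ⋯ ∘ Γ_{2m} ∘ κ`. -/
def opB (m : ℕ) : SpinorSpace m → SpinorSpace m :=
  gammaProd (List.ofFn fun j : Fin m =>
    (⟨m + (j : ℕ), by have := j.isLt; omega⟩ : Fin (2 * m))) ∘ conjOp

/-- for odd `m`, `A` commutes with every gamma operator, and for even `m`,
`B` commutes with every gamma operator (Pin(2m)-equivariance). -/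
theorem opA_opB_pin_equivariant (m : ℕ) (hm : 1 ≤ m) :
    (Odd m → ∀ I : Fin (2 * m), ∀ f : SpinorSpace m,
      opA m (gammaOp I f) = gammaOp I (opA m f)) ∧
    (Even m → ∀ I : Fin (2 * m), ∀ f : SpinorSpace m,
      opB m (gammaOp I f) = gammaOp I (opB m f)) := by
  set LA : List (Fin (2 * m)) := List.ofFn fun j : Fin m =>
    (⟨(j : ℕ), by have := j.isLt; omega⟩ : Fin (2 * m)) with hLA
  set LB : List (Fin (2 * m)) := List.ofFn fun j : Fin m =>
    (⟨m + (j : ℕ), by have := j.isLt; omega⟩ : Fin (2 * m)) with hLB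
  have lenLA : LA.length = m := by simp [hLA]
  have lenLB : LB.length = m := by simp [hLB]
  have ndLA : LA.Nodup := by
    rw [hLA, List.nodup_ofFn]
    intro a b hab
    have h' : (a : ℕ) = (b : ℕ) := by simpa [Fin.ext_iff] using hab
    exact Fin.ext h'
  have ndLB : LB.Nodup := by
    rw [hLB, List.nodup_ofFn]
    intro a b hab
    have h' : m + (a : ℕ) = m + (b : ℕ) := by simpa [Fin.ext_iff] using hab
    exact Fin.ext (by omega)
  have memLA : ∀ I : Fin (2 * m), I ∈ LA ↔ (I : ℕ) < m := by
    intro I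
    rw [hLA, List.mem_ofFn]
    constructor
    · rintro ⟨j, rfl⟩; exact j.isLt
    · intro h; exact ⟨⟨(I : ℕ), h⟩, Fin.ext rfl⟩
  have memLB : ∀ I : Fin (2 * m), I ∈ LB ↔ ¬ (I : ℕ) < m := by
    intro I
    rw [hLB, List.mem_ofFn]
    constructor
    · rintro ⟨j, rfl⟩; simp
    · intro h
      exact ⟨⟨(I : ℕ) - m, by have := I.isLt; omega⟩, Fin.ext (by simp; omega)⟩
  constructor
  · intro hodd I f
    simp only [opA, Function.comp_apply, ← hLA]
    by_cases h : (I : ℕ) < m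
    · rw [conj_gammaOp_lt h, move_mem LA I ndLA ((memLA I).2 h), lenLA]
      have he : Even (m - 1) := Nat.Odd.sub_odd hodd odd_one
      rw [he.neg_one_pow, one_smul]
    · rw [conj_gammaOp_ge h, gammaProd_neg,
        move_not_mem LA I (fun hc => h ((memLA I).1 hc)), lenLA,
        hodd.neg_one_pow, neg_smul, one_smul, neg_neg]
  · intro heven I f
    simp only [opB, Function.comp_apply, ← hLB]
    by_cases h : (I : ℕ) < m
    · rw [conj_gammaOp_lt h,
        move_not_mem LB I (fun hc => (memLB I).1 hc h), lenLB,
        heven.neg_one_pow, one_smul]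
    · rw [conj_gammaOp_ge h, gammaProd_neg, move_mem LB I ndLB ((memLB I).2 h), lenLB]
      have ho : Odd (m - 1) := Nat.Even.sub_odd hm heven odd_one
      rw [ho.neg_one_pow, neg_smul, one_smul, neg_neg]
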